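/- Fix l ∈ ℕ₀ and define for ρ ∈ (0,1): ψ_{0,l}(ρ) := ρ^{l+1} (1−ρ²)^{−1/2} (2/(1+√(1−ρ²)))^{3/2+l} and ψ_{1,l}(ρ) := ρ^{l+1} (1/((3+2l)√(1−ρ²))) [ (1/(1−√(1−ρ²)))^{3/2+l} − (1/(1+√(1−ρ²)))^{3/2+l} ]. Then both ψ_{0,l} and ψ_{1,l} solve the ordinary differential equation −(1−ρ²) u''(ρ) + (−2/ρ + 5ρ) u'(ρ) + (15/4 + (l+1)(l+2)/ρ²) u(ρ) = 0 on (0,1), and ψ_{0,l} and ψ_{1,l} are linearly independent. -/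

import Mathlib

noncomputable section

/-- `ψ_{0,l}(ρ) = ρ^{l+1} (1−ρ²)^{−1/2} (2/(1+√(1−ρ²)))^{3/2+l}` -/
def psi0 (l : ℕ) (ρ : ℝ) : ℝ :=
  ρ ^ (l + 1) * (1 - ρ ^ 2) ^ (-(1 / 2) : ℝ) *
    (2 / (1 + Real.sqrt (1 - ρ ^ 2))) ^ ((3 : ℝ) / 2 + l)

/-- `ψ_{1,l}(ρ) = ρ^{l+1} (1/((3+2l)√(1−ρ²))) [(1/(1−√(1−ρ²)))^{3/2+l} − (1/(1+√(1−ρ²)))^{3/2+l}]` -/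
def psi1 (l : ℕ) (ρ : ℝ) : ℝ :=
  ρ ^ (l + 1) * (1 / ((3 + 2 * (l : ℝ)) * Real.sqrt (1 - ρ ^ 2))) *
    ((1 / (1 - Real.sqrt (1 - ρ ^ 2))) ^ ((3 : ℝ) / 2 + l) -
      (1 / (1 + Real.sqrt (1 - ρ ^ 2))) ^ ((3 : ℝ) / 2 + l))

open Real Set Filter

def SS (ρ : ℝ) : ℝ := Real.sqrt (1 - ρ^2)

def cc (l : ℕ) : ℝ := (3:ℝ)/2 + l

lemma one_sub_sq_pos {ρ : ℝ} (h : ρ ∈ Set.Ioo (0:ℝ) 1) : 0 < 1 - ρ^2 := by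
  obtain ⟨h0, h1⟩ := h; nlinarith

lemma SS_pos {ρ : ℝ} (h : ρ ∈ Set.Ioo (0:ℝ) 1) : 0 < SS ρ :=
  Real.sqrt_pos.2 (one_sub_sq_pos h)

lemma SS_sq {ρ : ℝ} (h : ρ ∈ Set.Ioo (0:ℝ) 1) : (SS ρ)^2 = 1 - ρ^2 :=
  Real.sq_sqrt (one_sub_sq_pos h).le

lemma SS_lt_one {ρ : ℝ} (h : ρ ∈ Set.Ioo (0:ℝ) 1) : SS ρ < 1 := by
  have h2 := SS_sq h
  have h0 := SS_pos h
  nlinarith [h.1]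

lemma one_add_eps_SS_pos {ρ : ℝ} (h : ρ ∈ Set.Ioo (0:ℝ) 1) {ε : ℝ} (hε : ε = 1 ∨ ε = -1) :
    0 < 1 + ε * SS ρ := by
  rcases hε with rfl | rfl
  · have := SS_pos h; nlinarith
  · have := SS_lt_one h; nlinarith

lemma hasDerivAt_SS {ρ : ℝ} (h : ρ ∈ Set.Ioo (0:ℝ) 1) :
    HasDerivAt SS (-ρ / SS ρ) ρ := by
  have h1 : HasDerivAt (fun x : ℝ => 1 - x^2) (-(2*ρ)) ρ := by
    simpa using ((hasDerivAt_pow 2 ρ).const_sub 1)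
  have h2 := (Real.hasDerivAt_sqrt (ne_of_gt (one_sub_sq_pos h))).comp ρ h1
  refine h2.congr_deriv ?_
  have hs := SS_pos h
  unfold SS
  field_simp

/-- generic building block `W(ρ) = (b/(1+ε s))^c` -/
def WW (l : ℕ) (b ε : ℝ) (x : ℝ) : ℝ := (b / (1 + ε * SS x)) ^ (cc l)

lemma hasDerivAt_WW (l : ℕ) {b ε : ℝ} (hb : 0 < b) (hε : ε = 1 ∨ ε = -1)
    {ρ : ℝ} (h : ρ ∈ Set.Ioo (0:ℝ) 1) :
    HasDerivAt (WW l b ε) (ε * cc l * ρ / (SS ρ * (1 + ε * SS ρ)) * WW l b ε ρ) ρ := by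
  have hs := SS_pos h
  have hd := one_add_eps_SS_pos h hε
  have hbase : 0 < b / (1 + ε * SS ρ) := div_pos hb hd
  have hden : HasDerivAt (fun x => 1 + ε * SS x) (ε * (-ρ / SS ρ)) ρ :=
    ((hasDerivAt_SS h).const_mul ε).const_add 1
  have hf : HasDerivAt (fun x => b / (1 + ε * SS x))
      ((0 * (1 + ε * SS ρ) - b * (ε * (-ρ / SS ρ))) / (1 + ε * SS ρ)^2) ρ :=
    (hasDerivAt_const ρ b).div hden (ne_of_gt hd)
  have hrpow := hf.rpow_const (p := cc l) (Or.inl (ne_of_gt hbase))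
  refine hrpow.congr_deriv ?_
  rw [show cc l - 1 = cc l - 1 from rfl]
  rw [Real.rpow_sub hbase, Real.rpow_one]
  unfold WW
  field_simp
  ring

def uu (l : ℕ) (W : ℝ → ℝ) (ρ : ℝ) : ℝ := ρ^(l+1) * (SS ρ)⁻¹ * W ρ

def AA (l : ℕ) (ε ρ : ℝ) : ℝ :=
  ((l:ℝ)+1)/SS ρ + ρ^2/(SS ρ)^3 + ε * cc l * ρ^2/((SS ρ)^2 * (1 + ε * SS ρ))

def uu1 (l : ℕ) (ε : ℝ) (W : ℝ → ℝ) (ρ : ℝ) : ℝ := ρ^l * W ρ * AA l ε ρ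

def AA' (l : ℕ) (ε ρ : ℝ) : ℝ :=
  ((l:ℝ)+1)*ρ/(SS ρ)^3 + (2*ρ/(SS ρ)^3 + 3*ρ^3/(SS ρ)^5) +
    ε * cc l * (2*ρ/((SS ρ)^2*(1 + ε * SS ρ)) + ρ^3*(2 + 3*ε*SS ρ)/((SS ρ)^4*(1 + ε*SS ρ)^2))

def uu2 (l : ℕ) (ε : ℝ) (W : ℝ → ℝ) (ρ : ℝ) : ℝ :=
  (l:ℝ) * ρ^(l-1) * (W ρ * AA l ε ρ) +
    ρ^l * ((ε * cc l * ρ / (SS ρ * (1 + ε * SS ρ)) * W ρ) * AA l ε ρ + W ρ * AA' l ε ρ)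

lemma master1 (l : ℕ) {ε : ℝ} (hε : ε = 1 ∨ ε = -1) (W : ℝ → ℝ)
    (hW : ∀ x ∈ Set.Ioo (0:ℝ) 1,
      HasDerivAt W (ε * cc l * x / (SS x * (1 + ε * SS x)) * W x) x)
    {ρ : ℝ} (h : ρ ∈ Set.Ioo (0:ℝ) 1) :
    HasDerivAt (uu l W) (uu1 l ε W ρ) ρ := by
  have hs := SS_pos h
  have hd := one_add_eps_SS_pos h hε
  have hρ := h.1
  have hinv : HasDerivAt (fun x => (SS x)⁻¹) (ρ/(SS ρ)^3) ρ := by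
    have := (hasDerivAt_SS h).inv (ne_of_gt hs)
    refine this.congr_deriv ?_
    field_simp
  have hprod := ((hasDerivAt_pow (l+1) ρ).mul hinv).mul (hW ρ h)
  refine hprod.congr_deriv ?_
  unfold uu1 AA
  simp only [Nat.add_sub_cancel, Nat.cast_add, Nat.cast_one, Pi.mul_apply]
  field_simp
  ring

lemma hasDerivAt_AA (l : ℕ) {ε : ℝ} (hε : ε = 1 ∨ ε = -1)
    {ρ : ℝ} (h : ρ ∈ Set.Ioo (0:ℝ) 1) :
    HasDerivAt (AA l ε) (AA' l ε ρ) ρ := by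
  have hs := SS_pos h
  have hd := one_add_eps_SS_pos h hε
  have hS := hasDerivAt_SS h
  have h1 : HasDerivAt (fun x => ((l:ℝ)+1)/SS x)
      ((0 * SS ρ - ((l:ℝ)+1) * (-ρ / SS ρ)) / (SS ρ)^2) ρ :=
    (hasDerivAt_const ρ _).div hS (ne_of_gt hs)
  have h2 : HasDerivAt (fun x => x^2/(SS x)^3)
      ((2*ρ^(2-1) * (SS ρ)^3 - ρ^2 * (3 * (SS ρ)^(3-1) * (-ρ / SS ρ))) / ((SS ρ)^3)^2) ρ :=
    (hasDerivAt_pow 2 ρ).div (hS.pow 3) (by positivity)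
  have hden : HasDerivAt (fun x => (SS x)^2 * (1 + ε * SS x))
      ((2 * (SS ρ)^(2-1) * (-ρ / SS ρ)) * (1 + ε * SS ρ) + (SS ρ)^2 * (ε * (-ρ / SS ρ))) ρ :=
    (hS.pow 2).mul ((hS.const_mul ε).const_add 1)
  have h3 : HasDerivAt (fun x => ε * cc l * x^2/((SS x)^2 * (1 + ε * SS x)))
      (((ε * cc l * (2*ρ^(2-1))) * ((SS ρ)^2 * (1 + ε * SS ρ)) - ε * cc l * ρ^2 *
        ((2 * (SS ρ)^(2-1) * (-ρ / SS ρ)) * (1 + ε * SS ρ) + (SS ρ)^2 * (ε * (-ρ / SS ρ))))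
        / ((SS ρ)^2 * (1 + ε * SS ρ))^2) ρ :=
    ((hasDerivAt_pow 2 ρ).const_mul (ε * cc l)).div hden (by positivity)
  have hsum := (h1.add h2).add h3
  refine hsum.congr_deriv ?_
  unfold AA'
  field_simp
  ring

lemma master2 (l : ℕ) {ε : ℝ} (hε : ε = 1 ∨ ε = -1) (W : ℝ → ℝ)
    (hW : ∀ x ∈ Set.Ioo (0:ℝ) 1,
      HasDerivAt W (ε * cc l * x / (SS x * (1 + ε * SS x)) * W x) x)
    {ρ : ℝ} (h : ρ ∈ Set.Ioo (0:ℝ) 1) :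
    HasDerivAt (uu1 l ε W) (uu2 l ε W ρ) ρ := by
  have hprod := ((hasDerivAt_pow l ρ).mul (hW ρ h)).mul (hasDerivAt_AA l hε h)
  refine hprod.congr_deriv ?_
  unfold uu2
  simp only [Pi.mul_apply]
  ring

def Pfun (L r t e : ℝ) : ℝ :=
  (-5:ℝ) * r^3 * t^2 + (-2:ℝ) * r^3 * t^2 * L + (-35/2:ℝ) * r^3 * t^3 * e + (-12:ℝ) * r^3 * t^3 * L * e + (-2:ℝ) * r^3 * t^3 * L^2 * e + (35/4:ℝ) * r^3 * t^4 + (-25/2:ℝ) * r^3 * t^4 * e^2 + (6:ℝ) * r^3 * t^4 * L + (-10:ℝ) * r^3 * t^4 * L * e^2 + (1:ℝ) * r^3 * t^4 * L^2 + (-2:ℝ) * r^3 * t^4 * L^2 * e^2 + (35/2:ℝ) * r^3 * t^5 * e + (12:ℝ) * r^3 * t^5 * L * e + (2:ℝ) * r^3 * t^5 * L^2 * e + (35/4:ℝ) * r^3 * t^6 * e^2 + (6:ℝ) * r^3 * t^6 * L * e^2 + (1:ℝ) * r^3 * t^6 * L^2 * e^2 + (-3:ℝ) * r^5 + (-21/2:ℝ)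 * r^5 * t * e + (-3:ℝ) * r^5 * t * L * e + (8:ℝ) * r^5 * t^2 + (-45/4:ℝ) * r^5 * t^2 * e^2 + (2:ℝ) * r^5 * t^2 * L + (-7:ℝ) * r^5 * t^2 * L * e^2 + (-1:ℝ) * r^5 * t^2 * L^2 * e^2 + (28:ℝ) * r^5 * t^3 * e + (15:ℝ) * r^5 * t^3 * L * e + (2:ℝ) * r^5 * t^3 * L^2 * e + (20:ℝ) * r^5 * t^4 * e^2 + (13:ℝ) * r^5 * t^4 * L * e^2 + (2:ℝ) * r^5 * t^4 * L^2 * e^2 + (3:ℝ) * r^7 + (21/2:ℝ) * r^7 * t * e + (3:ℝ) * r^7 * t * L * e + (45/4:ℝ) * r^7 * t^2 * e^2 + (7:ℝ) * r^7 * t^2 * L * e^2 + (1:ℝ) * r^7 * t^2 * L^2 * e^2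

lemma key_poly (L r t e : ℝ) (ht : t^2 = 1 - r^2) (he : e^2 = 1) : Pfun L r t e = 0 := by
  unfold Pfun
  linear_combination ((5:ℝ) * r^3 * t^2 + (2:ℝ) * r^3 * t^2 * L + (35/2:ℝ) * r^3 * t^3 * e + (12:ℝ) * r^3 * t^3 * L * e + (2:ℝ) * r^3 * t^3 * L^2 * e + (35/4:ℝ) * r^3 * t^4 + (6:ℝ) * r^3 * t^4 * L + (1:ℝ) * r^3 * t^4 * L^2 + (3:ℝ) * r^5 + (21/2:ℝ) * r^5 * t * e + (3:ℝ) * r^5 * t * L * e + (45/4:ℝ) * r^5 * t^2 + (7:ℝ) * r^5 * t^2 * L + (1:ℝ) * r^5 * t^2 * L^2) * ht + ((-25/2:ℝ) * r^3 * t^4 + (-10:ℝ) * r^3 * t^4 * L + (-2:ℝ) * r^3 * t^4 * L^2 + (35/4:ℝ) * r^3 * t^6 + (6:ℝ) * r^3 * t^6 * L + (1:ℝ) * r^3 * t^6 * L^2 + (-45/4:ℝ) * r^5 * t^2 + (-7:ℝ) * r^5 * t^2 * L + (-1:ℝ) * r^5 * t^2 * L^2 + (20:ℝ) * r^5 * t^4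 + (13:ℝ) * r^5 * t^4 * L + (2:ℝ) * r^5 * t^4 * L^2 + (45/4:ℝ) * r^7 * t^2 + (7:ℝ) * r^7 * t^2 * L + (1:ℝ) * r^7 * t^2 * L^2) * he

lemma pow_pred (l : ℕ) {ρ : ℝ} (hρ : ρ ≠ 0) : (l:ℝ) * ρ^(l-1) = (l:ℝ) * ρ^l / ρ := by
  cases l with
  | zero => simp
  | succ n => 
    simp only [Nat.add_sub_cancel]
    rw [pow_succ]
    field_simp

lemma masterODE (l : ℕ) {ε : ℝ} (hε : ε = 1 ∨ ε = -1) (W : ℝ → ℝ)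
    {ρ : ℝ} (h : ρ ∈ Set.Ioo (0:ℝ) 1) :
    -(1 - ρ^2) * uu2 l ε W ρ + (-2/ρ + 5*ρ) * uu1 l ε W ρ +
      (15/4 + ((l:ℝ)+1) * ((l:ℝ)+2)/ρ^2) * uu l W ρ = 0 := by
  have hs := SS_pos h
  have hd := one_add_eps_SS_pos h hε
  have hρ := h.1
  have ht : (SS ρ)^2 = 1 - ρ^2 := SS_sq h
  have he : ε^2 = 1 := by rcases hε with rfl | rfl <;> norm_num
  have hkey := key_poly (l:ℝ) ρ (SS ρ) ε ht he
  have main : -(1 - ρ^2) * uu2 l ε W ρ + (-2/ρ + 5*ρ) * uu1 l ε W ρ +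
      (15/4 + ((l:ℝ)+1) * ((l:ℝ)+2)/ρ^2) * uu l W ρ =
      ρ^l * W ρ * Pfun (l:ℝ) ρ (SS ρ) ε / (ρ^2 * (SS ρ)^5 * (1 + ε * SS ρ)^2) := by
    unfold uu2 uu1 uu AA AA' Pfun cc
    rw [pow_pred l (ne_of_gt hρ)]
    have hd2 : 1 + SS ρ * ε ≠ 0 := by rw [mul_comm]; exact hd.ne'
    field_simp [hd.ne', hd2, hs.ne', hρ.ne']
    ring
  rw [main, hkey]
  simp



lemma rpow_neg_half_eq {ρ : ℝ} (h : ρ ∈ Set.Ioo (0:ℝ) 1) :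
    (1 - ρ^2) ^ (-(1/2) : ℝ) = (Real.sqrt (1 - ρ^2))⁻¹ := by
  rw [Real.rpow_neg (one_sub_sq_pos h).le, ← Real.sqrt_eq_rpow]

lemma psi0_eq_on (l : ℕ) : ∀ ρ ∈ Set.Ioo (0:ℝ) 1, psi0 l ρ = uu l (WW l 2 1) ρ := by
  intro ρ h
  unfold psi0 uu WW SS cc
  rw [rpow_neg_half_eq h, show (1:ℝ) + 1 * Real.sqrt (1 - ρ^2) = 1 + Real.sqrt (1 - ρ^2) by ring]

lemma psi1_eq_on (l : ℕ) : ∀ ρ ∈ Set.Ioo (0:ℝ) 1,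
    psi1 l ρ = (3 + 2*(l:ℝ))⁻¹ * (uu l (WW l 1 (-1)) ρ - uu l (WW l 1 1) ρ) := by
  intro ρ h
  have hs := SS_pos h
  have h3l : (3 + 2*(l:ℝ)) ≠ 0 := by positivity
  unfold psi1 uu WW SS cc
  rw [show (1:ℝ) + (-1) * Real.sqrt (1 - ρ^2) = 1 - Real.sqrt (1 - ρ^2) by ring,
    show (1:ℝ) + 1 * Real.sqrt (1 - ρ^2) = 1 + Real.sqrt (1 - ρ^2) by ring]
  unfold SS at hs
  field_simp

lemma deriv_transfer (f g g1 g2 : ℝ → ℝ)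
    (hfg : ∀ x ∈ Set.Ioo (0:ℝ) 1, f x = g x)
    (h1 : ∀ x ∈ Set.Ioo (0:ℝ) 1, HasDerivAt g (g1 x) x)
    (h2 : ∀ x ∈ Set.Ioo (0:ℝ) 1, HasDerivAt g1 (g2 x) x)
    {ρ : ℝ} (h : ρ ∈ Set.Ioo (0:ℝ) 1) :
    deriv f ρ = g1 ρ ∧ deriv (deriv f) ρ = g2 ρ := by
  have hd1 : ∀ x ∈ Set.Ioo (0:ℝ) 1, deriv f x = g1 x := by
    intro x hx
    have hevx : f =ᶠ[nhds x] g :=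
      Filter.eventually_of_mem (isOpen_Ioo.mem_nhds hx) hfg
    rw [hevx.deriv_eq, (h1 x hx).deriv]
  have hev1 : deriv f =ᶠ[nhds ρ] g1 :=
    Filter.eventually_of_mem (isOpen_Ioo.mem_nhds h) hd1
  exact ⟨hd1 ρ h, by rw [hev1.deriv_eq, (h2 ρ h).deriv]⟩

lemma psi0_ode (l : ℕ) : ∀ ρ ∈ Set.Ioo (0 : ℝ) 1,
    -(1 - ρ ^ 2) * deriv (deriv (psi0 l)) ρ + (-2 / ρ + 5 * ρ) * deriv (psi0 l) ρ +
      (15 / 4 + ((l : ℝ) + 1) * ((l : ℝ) + 2) / ρ ^ 2) * psi0 l ρ = 0 := by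
  intro ρ h
  have hW : ∀ x ∈ Set.Ioo (0:ℝ) 1, HasDerivAt (WW l 2 1)
      ((1:ℝ) * cc l * x / (SS x * (1 + 1 * SS x)) * WW l 2 1 x) x :=
    fun x hx => hasDerivAt_WW l two_pos (Or.inl rfl) hx
  obtain ⟨e1, e2⟩ := deriv_transfer (psi0 l) (uu l (WW l 2 1)) (uu1 l 1 (WW l 2 1))
    (uu2 l 1 (WW l 2 1)) (psi0_eq_on l)
    (fun x hx => master1 l (Or.inl rfl) _ hW hx)
    (fun x hx => master2 l (Or.inl rfl) _ hW hx) h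
  rw [e1, e2, psi0_eq_on l ρ h]
  exact masterODE l (Or.inl rfl) _ h

lemma psi1_ode (l : ℕ) : ∀ ρ ∈ Set.Ioo (0 : ℝ) 1,
    -(1 - ρ ^ 2) * deriv (deriv (psi1 l)) ρ + (-2 / ρ + 5 * ρ) * deriv (psi1 l) ρ +
      (15 / 4 + ((l : ℝ) + 1) * ((l : ℝ) + 2) / ρ ^ 2) * psi1 l ρ = 0 := by
  intro ρ h
  have hWm : ∀ x ∈ Set.Ioo (0:ℝ) 1, HasDerivAt (WW l 1 (-1))
      ((-1:ℝ) * cc l * x / (SS x * (1 + (-1) * SS x)) * WW l 1 (-1) x) x :=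
    fun x hx => hasDerivAt_WW l one_pos (Or.inr rfl) hx
  have hWp : ∀ x ∈ Set.Ioo (0:ℝ) 1, HasDerivAt (WW l 1 1)
      ((1:ℝ) * cc l * x / (SS x * (1 + 1 * SS x)) * WW l 1 1 x) x :=
    fun x hx => hasDerivAt_WW l one_pos (Or.inl rfl) hx
  obtain ⟨e1, e2⟩ := deriv_transfer (psi1 l)
    (fun x => (3 + 2*(l:ℝ))⁻¹ * (uu l (WW l 1 (-1)) x - uu l (WW l 1 1) x))
    (fun x => (3 + 2*(l:ℝ))⁻¹ * (uu1 l (-1) (WW l 1 (-1)) x - uu1 l 1 (WW l 1 1) x))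
    (fun x => (3 + 2*(l:ℝ))⁻¹ * (uu2 l (-1) (WW l 1 (-1)) x - uu2 l 1 (WW l 1 1) x))
    (psi1_eq_on l)
    (fun x hx => ((master1 l (Or.inr rfl) _ hWm hx).sub
      (master1 l (Or.inl rfl) _ hWp hx)).const_mul _)
    (fun x hx => ((master2 l (Or.inr rfl) _ hWm hx).sub
      (master2 l (Or.inl rfl) _ hWp hx)).const_mul _) h
  rw [e1, e2, psi1_eq_on l ρ h]
  have Em := masterODE l (ε := -1) (Or.inr rfl) (WW l 1 (-1)) h
  have Ep := masterODE l (ε := 1) (Or.inl rfl) (WW l 1 1) h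
  linear_combination (3 + 2*(l:ℝ))⁻¹ * Em - (3 + 2*(l:ℝ))⁻¹ * Ep


lemma sq_rpow_neg_half {x : ℝ} (hx : 0 < x) : (x^2) ^ (-(1/2):ℝ) = x⁻¹ := by
  rw [← Real.rpow_natCast x 2, ← Real.rpow_mul hx.le]
  norm_num [Real.rpow_neg_one]

lemma indep (l : ℕ) : ∀ a b : ℝ,
    (∀ ρ ∈ Set.Ioo (0 : ℝ) 1, a * psi0 l ρ + b * psi1 l ρ = 0) → a = 0 ∧ b = 0 := by
  intro a b hab
  have hc : (0:ℝ) < (3:ℝ)/2 + (l:ℝ) := by positivity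
  have hM : (0:ℝ) < 3 + 2*(l:ℝ) := by positivity
  have s35 : Real.sqrt (1 - (3/5:ℝ)^2) = (4:ℝ)/5 := by
    rw [show (1:ℝ) - (3/5:ℝ)^2 = ((4:ℝ)/5)^2 by norm_num]
    exact Real.sqrt_sq (by norm_num)
  have s45 : Real.sqrt (1 - (4/5:ℝ)^2) = (3:ℝ)/5 := by
    rw [show (1:ℝ) - (4/5:ℝ)^2 = ((3:ℝ)/5)^2 by norm_num]
    exact Real.sqrt_sq (by norm_num)
  have r35 : ((1:ℝ) - (3/5:ℝ)^2) ^ (-(1/2):ℝ) = 5/4 := by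
    rw [show (1:ℝ) - (3/5:ℝ)^2 = ((4:ℝ)/5)^2 by norm_num, sq_rpow_neg_half (by norm_num)]
    norm_num
  have r45 : ((1:ℝ) - (4/5:ℝ)^2) ^ (-(1/2):ℝ) = 5/3 := by
    rw [show (1:ℝ) - (4/5:ℝ)^2 = ((3:ℝ)/5)^2 by norm_num, sq_rpow_neg_half (by norm_num)]
    norm_num
  have m1 : ((5:ℝ)) ^ ((3:ℝ)/2 + (l:ℝ)) =
      ((10:ℝ)/9) ^ ((3:ℝ)/2 + (l:ℝ)) * ((9:ℝ)/2) ^ ((3:ℝ)/2 + (l:ℝ)) := by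
    rw [← Real.mul_rpow (by norm_num) (by norm_num)]; norm_num
  have m2 : ((5:ℝ)/9) ^ ((3:ℝ)/2 + (l:ℝ)) =
      ((10:ℝ)/9) ^ ((3:ℝ)/2 + (l:ℝ)) * ((1:ℝ)/2) ^ ((3:ℝ)/2 + (l:ℝ)) := by
    rw [← Real.mul_rpow (by norm_num) (by norm_num)]; norm_num
  have m3 : ((5:ℝ)/2) ^ ((3:ℝ)/2 + (l:ℝ)) =
      ((5:ℝ)/4) ^ ((3:ℝ)/2 + (l:ℝ)) * ((2:ℝ)) ^ ((3:ℝ)/2 + (l:ℝ)) := by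
    rw [← Real.mul_rpow (by norm_num) (by norm_num)]; norm_num
  have m4 : ((5:ℝ)/8) ^ ((3:ℝ)/2 + (l:ℝ)) =
      ((5:ℝ)/4) ^ ((3:ℝ)/2 + (l:ℝ)) * ((1:ℝ)/2) ^ ((3:ℝ)/2 + (l:ℝ)) := by
    rw [← Real.mul_rpow (by norm_num) (by norm_num)]; norm_num
  have E1 := hab (3/5) (by norm_num)
  have E2 := hab (4/5) (by norm_num)
  unfold psi0 psi1 at E1 E2
  rw [s35, r35, show (2:ℝ)/(1 + (4:ℝ)/5) = 10/9 by norm_num,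
    show (1:ℝ)/(1 - (4:ℝ)/5) = 5 by norm_num,
    show (1:ℝ)/(1 + (4:ℝ)/5) = 5/9 by norm_num, m1, m2] at E1
  rw [s45, r45, show (2:ℝ)/(1 + (3:ℝ)/5) = 5/4 by norm_num,
    show (1:ℝ)/(1 - (3:ℝ)/5) = 5/2 by norm_num,
    show (1:ℝ)/(1 + (3:ℝ)/5) = 5/8 by norm_num, m3, m4] at E2
  have G1 : (((3:ℝ)/5)^(l+1) * (((10:ℝ)/9) ^ ((3:ℝ)/2 + (l:ℝ)) * (5/4))) *
      (a + b/(3 + 2*(l:ℝ)) *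
        (((9:ℝ)/2) ^ ((3:ℝ)/2 + (l:ℝ)) - ((1:ℝ)/2) ^ ((3:ℝ)/2 + (l:ℝ)))) = 0 := by
    rw [← E1]; field_simp
  have G2 : (((4:ℝ)/5)^(l+1) * (((5:ℝ)/4) ^ ((3:ℝ)/2 + (l:ℝ)) * (5/3))) *
      (a + b/(3 + 2*(l:ℝ)) *
        (((2:ℝ)) ^ ((3:ℝ)/2 + (l:ℝ)) - ((1:ℝ)/2) ^ ((3:ℝ)/2 + (l:ℝ)))) = 0 := by
    rw [← E2]; field_simp
  have F1 : a + b/(3 + 2*(l:ℝ)) *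
      (((9:ℝ)/2) ^ ((3:ℝ)/2 + (l:ℝ)) - ((1:ℝ)/2) ^ ((3:ℝ)/2 + (l:ℝ))) = 0 := by
    rcases mul_eq_zero.mp G1 with h | h
    · exact absurd h (by positivity)
    · exact h
  have F2 : a + b/(3 + 2*(l:ℝ)) *
      (((2:ℝ)) ^ ((3:ℝ)/2 + (l:ℝ)) - ((1:ℝ)/2) ^ ((3:ℝ)/2 + (l:ℝ))) = 0 := by
    rcases mul_eq_zero.mp G2 with h | h
    · exact absurd h (by positivity)
    · exact h
  have hb' : b/(3 + 2*(l:ℝ)) *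
      (((9:ℝ)/2) ^ ((3:ℝ)/2 + (l:ℝ)) - ((2:ℝ)) ^ ((3:ℝ)/2 + (l:ℝ))) = 0 := by
    linear_combination F1 - F2
  have hA : ((2:ℝ)) ^ ((3:ℝ)/2 + (l:ℝ)) < ((9:ℝ)/2) ^ ((3:ℝ)/2 + (l:ℝ)) :=
    Real.rpow_lt_rpow (by norm_num) (by norm_num) hc
  have hb : b = 0 := by
    rcases mul_eq_zero.mp hb' with h | h
    · rcases div_eq_zero_iff.mp h with h' | h'
      · exact h'
      · exact absurd h' hM.ne'
    · linarith
  refine ⟨?_, hb⟩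
  rw [hb] at F1
  simpa using F1

/-- `ψ_{0,l}` and `ψ_{1,l}` both solve
`−(1−ρ²)u'' + (−2/ρ + 5ρ)u' + (15/4 + (l+1)(l+2)/ρ²)u = 0` on `(0,1)`, and they are
linearly independent. -/
theorem stmt_10 (l : ℕ) :
    (∀ ρ ∈ Set.Ioo (0 : ℝ) 1,
        -(1 - ρ ^ 2) * deriv (deriv (psi0 l)) ρ + (-2 / ρ + 5 * ρ) * deriv (psi0 l) ρ +
          (15 / 4 + ((l : ℝ) + 1) * ((l : ℝ) + 2) / ρ ^ 2) * psi0 l ρ = 0) ∧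
    (∀ ρ ∈ Set.Ioo (0 : ℝ) 1,
        -(1 - ρ ^ 2) * deriv (deriv (psi1 l)) ρ + (-2 / ρ + 5 * ρ) * deriv (psi1 l) ρ +
          (15 / 4 + ((l : ℝ) + 1) * ((l : ℝ) + 2) / ρ ^ 2) * psi1 l ρ = 0) ∧
    (∀ a b : ℝ, (∀ ρ ∈ Set.Ioo (0 : ℝ) 1, a * psi0 l ρ + b * psi1 l ρ = 0) →
        a = 0 ∧ b = 0) := by
  exact ⟨psi0_ode l, psi1_ode l, indep l⟩

end
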